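/- Let γ : ℕ → ℝ with associated polynomials P_n(x) = Σ_{k=0}^n (γ_k/k!) D^k[x^n] ∈ ℝ[x] for n ≥ 0. Then there exists a positive-definite moment functional 𝓛 : ℝ[x] → ℝ with respect to which {P_n}_{n=0}^∞ is an orthogonal polynomial sequence (i.e., deg P_n = n for all n and 𝓛[P_m P_n] = 0 for m ≠ n) if and only if γ_0 ≠ 0 and there exist α, β ∈ ℝ with α > 0 such that P_n = γ_0 · H_n^α(x − β) for all n (equivalently, γ_k is the k-th derivative at 0 of x ↦ γ_0·exp(−(α/2)x² − βx) for all k). -/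

import Mathlib

section StmtAux
open Polynomial Finset MeasureTheory Real Filter


variable {γ : ℕ → ℝ} {P : ℕ → Polynomial ℝ}

lemma Pform (hP : ∀ n : ℕ, P n = ∑ k ∈ Finset.range (n + 1),
      Polynomial.C (γ k / (k.factorial : ℝ)) * Polynomial.derivative^[k] (Polynomial.X ^ n))
    (n : ℕ) :
    P n = ∑ k ∈ Finset.range (n + 1),
      C (γ k * (n.descFactorial k : ℝ) / (k.factorial : ℝ)) * X ^ (n - k) := by
  rw [hP n]
  refine Finset.sum_congr rfl fun k _ => ?_
  rw [iterate_derivative_X_pow_eq_C_mul, ← mul_assoc, ← C_mul]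
  ring_nf

lemma Pzero (hP : ∀ n : ℕ, P n = ∑ k ∈ Finset.range (n + 1),
      Polynomial.C (γ k / (k.factorial : ℝ)) * Polynomial.derivative^[k] (Polynomial.X ^ n)) :
    P 0 = C (γ 0) := by
  rw [hP 0]; simp

lemma Pcoefftop (hP : ∀ n : ℕ, P n = ∑ k ∈ Finset.range (n + 1),
      Polynomial.C (γ k / (k.factorial : ℝ)) * Polynomial.derivative^[k] (Polynomial.X ^ n))
    (n : ℕ) : (P n).coeff n = γ 0 := by
  rw [Pform hP n, finset_sum_coeff]
  rw [Finset.sum_eq_single 0]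
  · simp
  · intro k hk hk0
    simp only [coeff_C_mul, coeff_X_pow]
    rw [if_neg, mul_zero]
    intro h
    have hkn : k ≤ n := Nat.lt_succ_iff.mp (Finset.mem_range.mp hk)
    omega
  · simp

lemma PdegLe (hP : ∀ n : ℕ, P n = ∑ k ∈ Finset.range (n + 1),
      Polynomial.C (γ k / (k.factorial : ℝ)) * Polynomial.derivative^[k] (Polynomial.X ^ n))
    (n : ℕ) : (P n).degree ≤ n := by
  rw [Pform hP n]
  refine (degree_sum_le _ _).trans ?_
  refine Finset.sup_le fun k _ => ?_
  exact (degree_C_mul_X_pow_le _ _).trans (by exact_mod_cast Nat.cast_le.mpr (Nat.sub_le n k))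

lemma PderivSucc (hP : ∀ n : ℕ, P n = ∑ k ∈ Finset.range (n + 1),
      Polynomial.C (γ k / (k.factorial : ℝ)) * Polynomial.derivative^[k] (Polynomial.X ^ n))
    (n : ℕ) : derivative (P (n + 1)) = (((n : ℝ) + 1)) • P n := by
  rw [hP (n+1), hP n, derivative_sum, Finset.smul_sum, Finset.sum_range_succ]
  have hlast : derivative (C (γ (n+1) / ((n+1).factorial : ℝ)) *
      derivative^[n+1] (X ^ (n+1) : ℝ[X])) = 0 := by
    have : derivative^[n+2] (X ^ (n+1) : ℝ[X]) = 0 :=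
      iterate_derivative_eq_zero (by simp [natDegree_X_pow])
    rw [derivative_C_mul, ← Function.iterate_succ_apply' derivative, this, mul_zero]
  rw [hlast, add_zero]
  refine Finset.sum_congr rfl fun k hk => ?_
  rw [derivative_C_mul, ← Function.iterate_succ_apply' derivative,
    Function.iterate_succ_apply, derivative_X_pow]
  push_cast
  rw [iterate_derivative_C_mul, smul_eq_C_mul]
  ring

lemma aux_span (Q : ℕ → Polynomial ℝ) (hc : ∀ n, (Q n).coeff n ≠ 0)
    (hd : ∀ n, (Q n).degree ≤ n) :
    ∀ (d : ℕ) (q : Polynomial ℝ), q.degree ≤ (d : ℕ) →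
      ∃ c : ℕ → ℝ, q = ∑ k ∈ range (d + 1), C (c k) * Q k := by
  intro d
  induction d with
  | zero =>
    intro q hq
    refine ⟨fun _ => q.coeff 0 / (Q 0).coeff 0, ?_⟩
    have h0 := eq_C_of_degree_le_zero (hd 0)
    have hq0 := eq_C_of_degree_le_zero (show q.degree ≤ 0 by exact_mod_cast hq)
    rw [Finset.sum_range_one]
    conv_lhs => rw [hq0]
    conv_rhs => rw [h0]
    simp [div_mul_cancel₀ _ (hc 0), ← C_mul]
  | succ d ih =>
    intro q hq
    set c' := q.coeff (d + 1) / (Q (d + 1)).coeff (d + 1) with hc'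
    set r := q - C c' * Q (d + 1) with hr
    have hrd : r.degree ≤ (d : ℕ) := by
      rw [degree_le_iff_coeff_zero]
      intro m hm
      have hm' : d + 1 ≤ m := by exact_mod_cast WithBot.coe_lt_coe.mp hm
      rcases eq_or_lt_of_le hm' with h | h
      · rw [hr, coeff_sub, coeff_C_mul, ← h, hc', div_mul_cancel₀ _ (hc (d+1)), sub_self]
      · rw [hr, coeff_sub, coeff_C_mul,
          coeff_eq_zero_of_degree_lt (lt_of_le_of_lt hq (by exact_mod_cast h)),
          coeff_eq_zero_of_degree_lt (lt_of_le_of_lt (hd (d+1)) (by exact_mod_cast h))]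
        ring
    obtain ⟨c, hcs⟩ := ih r hrd
    refine ⟨Function.update c (d + 1) c', ?_⟩
    rw [Finset.sum_range_succ, Function.update_self]
    have : ∑ k ∈ range (d + 1), C (Function.update c (d + 1) c' k) * Q k
        = ∑ k ∈ range (d + 1), C (c k) * Q k := by
      refine Finset.sum_congr rfl fun k hk => ?_
      rw [Function.update_of_ne (by simp at hk; omega) c' c]
    rw [this, ← hcs, hr]
    ring

lemma forward_rec (γ : ℕ → ℝ) (P : ℕ → Polynomial ℝ)
    (hP : ∀ n : ℕ, P n = ∑ k ∈ Finset.range (n + 1),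
      Polynomial.C (γ k / (k.factorial : ℝ)) * Polynomial.derivative^[k] (Polynomial.X ^ n))
    (L : Polynomial ℝ →ₗ[ℝ] ℝ)
    (hpos : ∀ q : Polynomial ℝ, q ≠ 0 → (∀ x : ℝ, 0 ≤ q.eval x) → 0 < L q)
    (hdeg : ∀ n : ℕ, (P n).degree = n)
    (horth : ∀ m n : ℕ, m ≠ n → L (P m * P n) = 0) :
    γ 0 ≠ 0 ∧ ∃ α β : ℝ, 0 < α ∧ (X * P 0 = P 1 + C β * P 0) ∧
      ∀ n : ℕ, X * P (n+1) = P (n+2) + C β * P (n+1) + C (((n : ℝ)+1) * α) * P n := by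
  have hγ0 : γ 0 ≠ 0 := by
    intro h
    have h0 := hdeg 0
    rw [Pzero hP, h, C_0, degree_zero] at h0
    exact absurd h0 (by simp)
  have hcoef : ∀ n, (P n).coeff n = γ 0 := Pcoefftop hP
  have hcne : ∀ n, (P n).coeff n ≠ 0 := fun n => (hcoef n).symm ▸ hγ0
  have hdle : ∀ n, (P n).degree ≤ n := PdegLe hP
  have hPne : ∀ n, P n ≠ 0 := by
    intro n h
    have := hdeg n
    rw [h, degree_zero] at this
    exact absurd this (by simp)
  have hL2 : ∀ n, 0 < L (P n * P n) := fun n =>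
    hpos _ (mul_ne_zero (hPne n) (hPne n)) (fun x => by rw [eval_mul]; exact mul_self_nonneg _)
  have span := aux_span P hcne hdle
  have orth_low : ∀ (d m : ℕ), d < m → ∀ q : Polynomial ℝ, q.degree ≤ (d : ℕ) →
      L (P m * q) = 0 := by
    intro d m hdm q hq
    obtain ⟨c, rfl⟩ := span d q hq
    rw [Finset.mul_sum, map_sum]
    refine Finset.sum_eq_zero fun k hk => ?_
    have h1 : P m * (C (c k) * P k) = c k • (P m * P k) := by
      rw [smul_eq_C_mul]; ring
    rw [h1, _root_.map_smul, horth m k (by simp at hk; omega), smul_zero]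
  have Texp : ∀ n : ℕ, ∃ c : ℕ → ℝ,
      (X * P n - P (n+1) = ∑ k ∈ range (n + 1), C (c k) * P k) ∧
      ∀ j ∈ range (n + 1), L ((X * P n - P (n+1)) * P j) = c j * L (P j * P j) := by
    intro n
    have hdT : (X * P n - P (n+1)).degree ≤ (n : WithBot ℕ) := by
      rw [degree_le_iff_coeff_zero]
      intro m hm
      have hm1 : n + 1 ≤ m := by exact_mod_cast Nat.add_one_le_iff.mpr (by exact_mod_cast hm)
      obtain ⟨k, rfl⟩ : ∃ k, m = k + 1 := ⟨m - 1, by omega⟩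
      rw [coeff_sub, coeff_X_mul]
      rcases eq_or_lt_of_le (show n ≤ k by omega) with h | h
      · subst h; rw [hcoef, hcoef, sub_self]
      · rw [coeff_eq_zero_of_degree_lt (lt_of_le_of_lt (hdle n) (by exact_mod_cast h)),
          coeff_eq_zero_of_degree_lt (lt_of_le_of_lt (hdle (n+1))
            (by exact_mod_cast (show ((n:ℕ)+1) < (k+1:ℕ) by omega))), sub_self]
    obtain ⟨c, hc⟩ := span n _ hdT
    refine ⟨c, hc, fun j hj => ?_⟩
    rw [hc, Finset.sum_mul, map_sum, Finset.sum_eq_single j]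
    · rw [show C (c j) * P j * P j = c j • (P j * P j) by rw [smul_eq_C_mul]; ring, _root_.map_smul]
      rfl
    · intro k hk hkj
      rw [show C (c k) * P k * P j = c k • (P k * P j) by rw [smul_eq_C_mul]; ring,
        _root_.map_smul, horth k j hkj, smul_zero]
    · intro h; exact absurd hj h
  have Tlow : ∀ n j : ℕ, j + 2 ≤ n → L ((X * P n - P (n+1)) * P j) = 0 := by
    intro n j hj
    have h1 : (X * P n - P (n+1)) * P j = P n * (X * P j) - P (n+1) * P j := by ring
    rw [h1, map_sub, horth (n+1) j (by omega), sub_zero]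
    refine orth_low (j+1) n (by omega) (X * P j) ?_
    calc (X * P j).degree ≤ X.degree + (P j).degree := degree_mul_le _ _
      _ ≤ 1 + (j : ℕ) := add_le_add (le_of_eq degree_X) (hdle j)
      _ = ((j + 1 : ℕ) : WithBot ℕ) := by push_cast; ring
  obtain ⟨b0, hb0⟩ : ∃ b0 : ℝ, X * P 0 = P 1 + C b0 * P 0 := by
    obtain ⟨c, hc, _⟩ := Texp 0
    rw [Finset.sum_range_one] at hc
    exact ⟨c 0, by linear_combination hc⟩
  have recS : ∀ m : ℕ, ∃ b l : ℝ, (X * P (m+1) = P (m+2) + C b * P (m+1) + C l * P m) ∧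
      l * L (P m * P m) = L ((X * P (m+1) - P (m+2)) * P m) := by
    intro m
    obtain ⟨c, hc, hcL⟩ := Texp (m+1)
    have hzero : ∀ k ∈ range m, C (c k) * P k = 0 := by
      intro k hk
      have hk2 : k + 2 ≤ m + 1 := by simp at hk; omega
      have h1 := hcL k (by simp; omega)
      rw [Tlow (m+1) k hk2] at h1
      have : c k = 0 := by
        rcases mul_eq_zero.mp h1.symm with h | h
        · exact h
        · exact absurd h (ne_of_gt (hL2 k))
      rw [this, C_0, zero_mul]
    have hc2 : X * P (m+1) - P (m+2) = C (c (m+1)) * P (m+1) + C (c m) * P m := by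
      rw [hc, Finset.sum_range_succ, Finset.sum_range_succ, Finset.sum_eq_zero hzero]
      ring
    exact ⟨c (m+1), c m, by linear_combination hc2, (hcL m (Finset.mem_range.mpr (by omega))).symm⟩
  choose b l hrec hlL using recS
  have lpos : ∀ m, 0 < l m := by
    intro m
    have key : l m * L (P m * P m) = L (P (m+1) * P (m+1)) := by
      rw [hlL m]
      have h1 : (X * P (m+1) - P (m+2)) * P m = P (m+1) * (X * P m) - P (m+2) * P m := by ring
      rw [h1, map_sub, horth (m+2) m (by omega), sub_zero]
      cases m with
      | zero =>
        rw [hb0]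
        have : P 1 * (P 1 + C b0 * P 0) = P 1 * P 1 + b0 • (P 1 * P 0) := by
          rw [smul_eq_C_mul]; ring
        rw [this, map_add, _root_.map_smul, horth 1 0 (by omega), smul_zero, add_zero]
      | succ k =>
        rw [hrec k]
        have : P (k+2) * (P (k+2) + C (b k) * P (k+1) + C (l k) * P k)
            = P (k+2) * P (k+2) + (b k) • (P (k+2) * P (k+1)) + (l k) • (P (k+2) * P k) := by
          simp only [smul_eq_C_mul]; ring
        rw [this, map_add, map_add, _root_.map_smul, _root_.map_smul, horth (k+2) (k+1) (by omega),
          horth (k+2) k (by omega), smul_zero, smul_zero, add_zero, add_zero]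
    nlinarith [hL2 m, hL2 (m+1)]
  -- differentiate the recurrences
  have hb00 : b 0 = b0 := by
    have hD := congrArg derivative (hrec 0)
    rw [derivative_mul, derivative_X, derivative_add, derivative_add, derivative_mul,
      derivative_mul, derivative_C, derivative_C, PderivSucc hP 0, PderivSucc hP 1,
      Pzero hP, derivative_C] at hD
    rw [← Pzero hP] at hD
    simp only [smul_eq_C_mul, Nat.cast_zero, Nat.cast_one, zero_add, C_1, one_mul,
      mul_zero, zero_mul, add_zero, map_ofNat, C_add] at hD
    have hPX : X * P 0 = P 1 + C (b 0) * P 0 := by linear_combination hD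
    have hb0' := hb0
    rw [hPX] at hb0'
    have h4 : (C b0 - C (b 0)) * P 0 = 0 := by linear_combination -hb0'
    rcases mul_eq_zero.mp h4 with h | h
    · have : C b0 = C (b 0) := by linear_combination h
      exact (C_inj.mp this).symm
    · exact absurd h (hPne 0)
  have hstep : ∀ n : ℕ, b (n+1) = b n ∧ ((n:ℝ)+2) * l n = ((n:ℝ)+1) * l (n+1) := by
    intro n
    have hD := congrArg derivative (hrec (n+1))
    rw [derivative_mul, derivative_X, derivative_add, derivative_add, derivative_mul,
      derivative_mul, derivative_C, derivative_C, PderivSucc hP (n+1), PderivSucc hP (n+2),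
      PderivSucc hP n] at hD
    simp only [one_mul, zero_mul, zero_add] at hD
    push_cast at hD
    simp only [smul_eq_C_mul, C_add, C_1, C_eq_natCast, map_ofNat] at hD
    have heq : C (((n:ℝ)+2) * (b n - b (n+1))) * P (n+1)
        + C (((n:ℝ)+2) * l n - ((n:ℝ)+1) * l (n+1)) * P n = 0 := by
      simp only [C_mul, C_sub, C_add, C_1, C_eq_natCast, map_ofNat]
      linear_combination hD - (((n:ℕ) : Polynomial ℝ) + 2) * hrec n
    have hb1 : b (n+1) = b n := by
      have hco := congrArg (fun p => coeff p (n+1)) heq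
      simp only [coeff_add, coeff_C_mul, coeff_zero] at hco
      rw [hcoef (n+1), coeff_eq_zero_of_degree_lt (lt_of_le_of_lt (hdle n)
        (by exact_mod_cast Nat.lt_succ_self n)), mul_zero, add_zero] at hco
      have h5 : ((n:ℝ)+2) * (b n - b (n+1)) = 0 := by
        rcases mul_eq_zero.mp hco with h | h
        · exact h
        · exact absurd h hγ0
      have h6 : b n - b (n+1) = 0 := by
        rcases mul_eq_zero.mp h5 with h | h
        · exfalso; have hn : (0:ℝ) ≤ (n:ℝ) := Nat.cast_nonneg n; linarith
        · exact h
      linarith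
    refine ⟨hb1, ?_⟩
    rw [hb1, sub_self, mul_zero, C_0, zero_mul, zero_add] at heq
    rcases mul_eq_zero.mp heq with h | h
    · have h7 : ((n:ℝ)+2) * l n - ((n:ℝ)+1) * l (n+1) = 0 := by
        rwa [← C_0, C_inj] at h
      linarith
    · exact absurd h (hPne n)
  refine ⟨hγ0, l 0, b0, lpos 0, hb0, fun n => ?_⟩
  have hbconst : ∀ n, b n = b0 := by
    intro n
    induction n with
    | zero => exact hb00
    | succ k ih => rw [(hstep k).1, ih]
  have hlval : ∀ n, l n = ((n:ℝ)+1) * l 0 := by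
    intro n
    induction n with
    | zero => norm_num
    | succ k ih =>
      have h := (hstep k).2
      rw [ih] at h
      have hk1 : ((k:ℝ)+1) ≠ 0 := by positivity
      have : ((k:ℝ)+1) * l (k+1) = ((k:ℝ)+1) * (((k:ℝ)+2) * l 0) := by linarith
      have h2 := mul_left_cancel₀ hk1 this
      rw [h2]; push_cast; ring
  rw [hrec n, hbconst n, hlval n]


lemma rec_to_H (γ0 α β : ℝ) (P : ℕ → Polynomial ℝ) (H : ℝ → ℕ → Polynomial ℝ)
    (hH0 : ∀ α : ℝ, H α 0 = 1) (hH1 : ∀ α : ℝ, H α 1 = Polynomial.X)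
    (hH : ∀ α : ℝ, ∀ n : ℕ, 2 ≤ n →
      H α n = Polynomial.X * H α (n - 1) - Polynomial.C (α * ((n : ℝ) - 1)) * H α (n - 2))
    (hP0 : P 0 = C γ0)
    (hrec0 : X * P 0 = P 1 + C β * P 0)
    (hrecS : ∀ n : ℕ, X * P (n+1) = P (n+2) + C β * P (n+1) + C (((n:ℝ)+1) * α) * P n) :
    ∀ n, P n = C γ0 * (H α n).comp (X - C β) := by
  have Hrec : ∀ n : ℕ, H α (n+2) = X * H α (n+1) - C (α * ((n:ℝ)+1)) * H α n := by
    intro n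
    have h := hH α (n+2) (by omega)
    have e1 : n + 2 - 1 = n + 1 := by omega
    have e2 : n + 2 - 2 = n := by omega
    rw [e1, e2] at h
    have e3 : ((n+2 : ℕ) : ℝ) - 1 = (n : ℝ) + 1 := by push_cast; ring
    rw [e3] at h
    exact h
  have key : ∀ n, P n = C γ0 * (H α n).comp (X - C β) ∧
      P (n+1) = C γ0 * (H α (n+1)).comp (X - C β) := by
    intro n
    induction n with
    | zero =>
      constructor
      · rw [hP0, hH0, one_comp, mul_one]
      · have h1 : P 1 = C γ0 * (X - C β) := by
          rw [hP0] at hrec0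
          linear_combination -hrec0
        rw [h1, hH1, X_comp]
    | succ k ih =>
      refine ⟨ih.2, ?_⟩
      have h2 := hrecS k
      have h3 : P (k+2) = (X - C β) * P (k+1) - C (((k:ℝ)+1) * α) * P k := by
        linear_combination -h2
      rw [h3, ih.1, ih.2, Hrec k, sub_comp, mul_comp, mul_comp, X_comp, C_comp]
      simp only [C_mul, C_add, C_1]
      ring
  exact fun n => (key n).1


lemma int_poly_gauss {b : ℝ} (hb : 0 < b) (p : Polynomial ℝ) :
    Integrable fun x : ℝ => p.eval x * Real.exp (-b * x^2) := by
  induction p using Polynomial.induction_on' with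
  | add p q hp hq =>
    simpa [add_mul, Pi.add_def] using hp.add hq
  | monomial n a =>
    have h : Integrable fun x : ℝ => x^n * Real.exp (-b*x^2) := by
      have h2 := integrable_rpow_mul_exp_neg_mul_sq hb (s := (n:ℝ))
        (lt_of_lt_of_le neg_one_lt_zero (Nat.cast_nonneg n))
      simpa [Real.rpow_natCast] using h2
    simp only [eval_monomial]
    simpa [mul_assoc] using h.const_mul a

lemma int_poly_gauss' {b : ℝ} (hb : 0 < b) (β : ℝ) (p : Polynomial ℝ) :
    Integrable fun x : ℝ => p.eval x * Real.exp (-b * (x - β)^2) := by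
  have h := (int_poly_gauss hb (p.comp (X + C β))).comp_sub_right β
  refine h.congr (Eventually.of_forall fun x => ?_)
  simp [eval_comp]

lemma tendsto_poly_gauss {b : ℝ} (hb : 0 < b) (p : Polynomial ℝ) :
    Tendsto (fun x : ℝ => p.eval x * Real.exp (-b * x^2)) atTop (nhds 0) := by
  have hmono : ∀ n : ℕ, Tendsto (fun x : ℝ => x^n * Real.exp (-b * x^2)) atTop (nhds 0) := by
    intro n
    have h := rpow_mul_exp_neg_mul_sq_isLittleO_exp_neg hb (n : ℝ)
    have h2 : (fun x : ℝ => x^n * Real.exp (-b * x^2)) =o[atTop]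
        fun x : ℝ => Real.exp (-(1/2) * x) := by
      simpa only [Real.rpow_natCast] using h
    have h3 : Tendsto (fun x : ℝ => Real.exp (-(1/2) * x)) atTop (nhds 0) := by
      have hl : Tendsto (fun x : ℝ => -(1/2) * x) atTop atBot := by
        have h4 : Tendsto (fun x : ℝ => (1/2) * x) atTop atTop :=
          (tendsto_id (α := ℝ)).const_mul_atTop (by norm_num)
        have h5 := tendsto_neg_atTop_atBot.comp h4
        refine h5.congr fun x => ?_
        simp [Function.comp]
      exact Real.tendsto_exp_atBot.comp hl
    exact h2.trans_tendsto h3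
  have heval : (fun x : ℝ => p.eval x * Real.exp (-b * x^2))
      = fun x : ℝ => ∑ i ∈ range (p.natDegree + 1), p.coeff i * (x^i * Real.exp (-b * x^2)) := by
    funext x
    rw [Polynomial.eval_eq_sum_range, Finset.sum_mul]
    exact Finset.sum_congr rfl fun i _ => by ring
  rw [heval]
  have := tendsto_finset_sum (range (p.natDegree + 1))
    (fun i _ => ((hmono i).const_mul (p.coeff i)))
  simpa using this
lemma tendsto_poly_gauss_bot {b : ℝ} (hb : 0 < b) (p : Polynomial ℝ) :
    Tendsto (fun x : ℝ => p.eval x * Real.exp (-b * x^2)) atBot (nhds 0) := by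
  have h := (tendsto_poly_gauss hb (p.comp (-X))).comp tendsto_neg_atBot_atTop
  refine h.congr fun x => ?_
  simp [eval_comp, Function.comp]
lemma tendsto_poly_gauss' {b : ℝ} (hb : 0 < b) (β : ℝ) (p : Polynomial ℝ) :
    Tendsto (fun x : ℝ => p.eval x * Real.exp (-b * (x - β)^2)) atTop (nhds 0) := by
  have h := (tendsto_poly_gauss hb (p.comp (X + C β))).comp
    (tendsto_atTop_add_const_right atTop (-β) tendsto_id)
  refine h.congr fun x => ?_
  simp [eval_comp, Function.comp, sub_eq_add_neg]
lemma tendsto_poly_gauss_bot' {b : ℝ} (hb : 0 < b) (β : ℝ) (p : Polynomial ℝ) :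
    Tendsto (fun x : ℝ => p.eval x * Real.exp (-b * (x - β)^2)) atBot (nhds 0) := by
  have h := (tendsto_poly_gauss_bot hb (p.comp (X + C β))).comp
    (tendsto_atBot_add_const_right atBot (-β) tendsto_id)
  refine h.congr fun x => ?_
  simp [eval_comp, Function.comp, sub_eq_add_neg]

lemma gauss_ibp {b : ℝ} (hb : 0 < b) (β : ℝ) (p : Polynomial ℝ) :
    ∫ x : ℝ, (derivative p - C (2*b) * ((X - C β) * p)).eval x * Real.exp (-b * (x - β)^2) = 0 := by
  set w : ℝ → ℝ := fun x => Real.exp (-b * (x - β)^2) with hw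
  have hderiv : ∀ x : ℝ, HasDerivAt (fun x => p.eval x * w x)
      ((derivative p - C (2*b) * ((X - C β) * p)).eval x * w x) x := by
    intro x
    have h1 : HasDerivAt (fun x : ℝ => p.eval x) ((derivative p).eval x) x := p.hasDerivAt x
    have h2 : HasDerivAt (fun x : ℝ => -b * (x - β)^2) (-b * (2 * (x - β))) x := by
      have := (((hasDerivAt_id x).sub_const β).pow 2).const_mul (-b)
      simpa using this
    have h3 := h2.exp
    have h4 := h1.mul h3
    refine h4.congr_deriv ?_
    simp only [hw, eval_sub, eval_mul, eval_C, eval_sub, eval_X, eval_pow]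
    ring
  have hint : Integrable fun x : ℝ =>
      (derivative p - C (2*b) * ((X - C β) * p)).eval x * Real.exp (-b * (x - β)^2) :=
    int_poly_gauss' hb β _
  have h0 := integral_of_hasDerivAt_of_tendsto hderiv hint
    (tendsto_poly_gauss_bot' hb β p) (tendsto_poly_gauss' hb β p)
  simpa [hw, neg_mul] using h0

lemma gauss_pos {b : ℝ} (hb : 0 < b) (β : ℝ) (q : Polynomial ℝ) (hne : q ≠ 0)
    (hnn : ∀ x : ℝ, 0 ≤ q.eval x) :
    0 < ∫ x : ℝ, q.eval x * Real.exp (-b * (x - β)^2) := by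
  have hint := int_poly_gauss' hb β q
  rw [integral_pos_iff_support_of_nonneg_ae
    (Eventually.of_forall fun x => mul_nonneg (hnn x) (Real.exp_nonneg _)) hint]
  by_contra hsup
  push_neg at hsup
  have h0 : volume (Function.support fun x : ℝ => q.eval x * Real.exp (-b * (x - β)^2)) = 0 :=
    le_antisymm hsup zero_le
  have hroots : volume {x : ℝ | q.IsRoot x} = 0 :=
    (Polynomial.finite_setOf_isRoot hne).measure_zero _
  have hcover : (Set.univ : Set ℝ) ⊆
      (Function.support fun x : ℝ => q.eval x * Real.exp (-b * (x - β)^2)) ∪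
      {x : ℝ | q.IsRoot x} := by
    intro x _
    by_cases h : q.eval x = 0
    · exact Or.inr h
    · exact Or.inl (by
        simp only [Function.mem_support]
        exact mul_ne_zero h (Real.exp_ne_zero _))
  have hle := (measure_mono (μ := volume) hcover).trans (measure_union_le _ _)
  rw [h0, hroots, add_zero, Real.volume_univ] at hle
  simp at hle

lemma reverse_dir (γ : ℕ → ℝ) (P : ℕ → Polynomial ℝ)
    (hP : ∀ n : ℕ, P n = ∑ k ∈ Finset.range (n + 1),
      Polynomial.C (γ k / (k.factorial : ℝ)) * Polynomial.derivative^[k] (Polynomial.X ^ n))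
    (hγ0 : γ 0 ≠ 0) (α β : ℝ) (hα : 0 < α)
    (hrec0 : X * P 0 = P 1 + C β * P 0)
    (hrecS : ∀ n : ℕ, X * P (n+1) = P (n+2) + C β * P (n+1) + C (((n:ℝ)+1) * α) * P n) :
    ∃ L : Polynomial ℝ →ₗ[ℝ] ℝ,
        (∀ q : Polynomial ℝ, q ≠ 0 → (∀ x : ℝ, 0 ≤ q.eval x) → 0 < L q) ∧
        (∀ n : ℕ, (P n).degree = n) ∧
        (∀ m n : ℕ, m ≠ n → L (P m * P n) = 0) := by
  have hb : 0 < (2*α)⁻¹ := by positivity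
  set b : ℝ := (2*α)⁻¹ with hbdef
  let L : Polynomial ℝ →ₗ[ℝ] ℝ :=
    { toFun := fun p => ∫ x : ℝ, p.eval x * Real.exp (-b * (x - β)^2)
      map_add' := by
        intro p q
        simp only [eval_add, add_mul]
        exact integral_add (int_poly_gauss' hb β p) (int_poly_gauss' hb β q)
      map_smul' := by
        intro a p
        simp only [eval_smul, smul_eq_mul, RingHom.id_apply, mul_assoc]
        exact integral_const_mul a _ }
  have hLdef : ∀ p : Polynomial ℝ, L p = ∫ x : ℝ, p.eval x * Real.exp (-b * (x - β)^2) :=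
    fun p => rfl
  have Lmom : ∀ p : Polynomial ℝ, L (X * p) = β * L p + α * L (derivative p) := by
    intro p
    have h0 := gauss_ibp hb β p
    have hsplit : derivative p - C (2*b) * ((X - C β) * p)
        = derivative p - (2*b) • (X * p) + (2*b*β) • p := by
      simp only [smul_eq_C_mul, C_mul]
      ring
    have h1 : L (derivative p - (2*b) • (X * p) + (2*b*β) • p) = 0 := by
      rw [← hsplit]
      exact h0
    rw [map_add, map_sub, _root_.map_smul, _root_.map_smul] at h1
    have h2b : 2 * b = α⁻¹ := by
      rw [hbdef]; field_simp
    rw [h2b] at h1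
    have hαne : α ≠ 0 := ne_of_gt hα
    simp only [smul_eq_mul] at h1
    field_simp at h1
    nlinarith [h1]
  have hLpos : ∀ q : Polynomial ℝ, q ≠ 0 → (∀ x : ℝ, 0 ≤ q.eval x) → 0 < L q := by
    intro q hne hnn
    rw [hLdef]
    exact gauss_pos hb β q hne hnn
  have hcoef := Pcoefftop hP
  have hdle := PdegLe hP
  have hdeg : ∀ n : ℕ, (P n).degree = n := by
    intro n
    refine le_antisymm (hdle n) (le_degree_of_ne_zero ?_)
    rw [hcoef n]
    exact hγ0
  have derivP := PderivSucc hP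
  have key0 : ∀ n : ℕ, L (P (n+1)) = 0 := by
    intro n
    cases n with
    | zero =>
      have h1 : P 1 = X * P 0 - C β * P 0 := by linear_combination -hrec0
      have h2 : C β * P 0 = β • P 0 := by rw [smul_eq_C_mul]
      rw [h1, h2, map_sub, _root_.map_smul, Lmom (P 0)]
      have h3 : derivative (P 0) = 0 := by rw [Pzero hP]; simp
      rw [h3, map_zero, mul_zero, add_zero, smul_eq_mul, sub_self]
    | succ k =>
      have h1 : P (k+2) = X * P (k+1) - β • P (k+1) - (((k:ℝ)+1) * α) • P k := by
        simp only [smul_eq_C_mul]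
        linear_combination -hrecS k
      rw [h1, map_sub, map_sub, _root_.map_smul, _root_.map_smul, Lmom (P (k+1)),
        derivP k, _root_.map_smul]
      simp only [smul_eq_mul]
      ring
  have keyM : ∀ m : ℕ, ∀ n : ℕ, m < n → L (P n * X^m) = 0 := by
    intro m
    induction m with
    | zero =>
      intro n hn
      obtain ⟨k, rfl⟩ : ∃ k, n = k + 1 := ⟨n - 1, by omega⟩
      simpa using key0 k
    | succ m ih =>
      intro n hn
      obtain ⟨k, rfl⟩ : ∃ k, n = k + 2 := ⟨n - 2, by omega⟩
      have hrw : P (k+2) * X^(m+1) = X * (P (k+1) * X^(m+1))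
          - β • (P (k+1) * X^(m+1)) - (((k:ℝ)+1) * α) • (P k * X^(m+1)) := by
        simp only [smul_eq_C_mul]
        linear_combination (-(X:Polynomial ℝ)^(m+1)) * hrecS k
      have hder : derivative (P (k+1) * X^(m+1))
          = ((k:ℝ)+1) • (P k * X^(m+1)) + ((m:ℝ)+1) • (P (k+1) * X^m) := by
        rw [derivative_mul, derivP k, derivative_X_pow]
        simp only [smul_eq_C_mul]
        push_cast
        ring
      rw [hrw, map_sub, map_sub, _root_.map_smul, _root_.map_smul,
        Lmom (P (k+1) * X^(m+1)), hder, map_add, _root_.map_smul, _root_.map_smul,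
        ih (k+1) (by omega)]
      simp only [smul_eq_mul]
      ring
  refine ⟨L, hLpos, hdeg, ?_⟩
  have haux : ∀ m n : ℕ, m < n → L (P n * P m) = 0 := by
    intro m n hmn
    have hnd : (P m).natDegree ≤ m := natDegree_le_iff_degree_le.mpr (hdle m)
    have hsum : P m = ∑ i ∈ range ((P m).natDegree + 1), C ((P m).coeff i) * X^i := by
      conv_lhs => rw [(P m).as_sum_range]
      exact Finset.sum_congr rfl fun i _ => (C_mul_X_pow_eq_monomial).symm
    rw [hsum, Finset.mul_sum, map_sum]
    refine Finset.sum_eq_zero fun i hi => ?_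
    have hi' : i < n := by
      have := Finset.mem_range.mp hi
      omega
    have h2 : P n * (C ((P m).coeff i) * X^i) = ((P m).coeff i) • (P n * X^i) := by
      rw [smul_eq_C_mul]; ring
    rw [h2, _root_.map_smul, keyM i n hi', smul_zero]
  intro m n hmn
  rcases lt_or_gt_of_ne hmn with h | h
  · rw [mul_comm]
    exact haux m n h
  · exact haux n m h


lemma Hrec_std (H : ℝ → ℕ → Polynomial ℝ)
    (hH : ∀ α : ℝ, ∀ n : ℕ, 2 ≤ n →
      H α n = Polynomial.X * H α (n - 1) - Polynomial.C (α * ((n : ℝ) - 1)) * H α (n - 2))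
    (α : ℝ) (n : ℕ) :
    H α (n+2) = X * H α (n+1) - C (α * ((n:ℝ)+1)) * H α n := by
  have h := hH α (n+2) (by omega)
  have e1 : n + 2 - 1 = n + 1 := by omega
  have e2 : n + 2 - 2 = n := by omega
  rw [e1, e2] at h
  have e3 : ((n+2 : ℕ) : ℝ) - 1 = (n : ℝ) + 1 := by push_cast; ring
  rw [e3] at h
  exact h

end StmtAux

open Polynomial Finset

/-- `P n = ∑_{k=0}^n (γ k / k!) D^k[x^n]` is an OPS with respect to a
positive-definite moment functional iff `γ 0 ≠ 0` and `P n = γ 0 · H_n^α(x - β)` for some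
`α > 0`, `β ∈ ℝ`, where `H α` denotes the generalized Hermite polynomial family with
parameter `α`. -/
theorem stmt_8 (γ : ℕ → ℝ) (P : ℕ → Polynomial ℝ)
    (hP : ∀ n : ℕ, P n = ∑ k ∈ Finset.range (n + 1),
      Polynomial.C (γ k / (k.factorial : ℝ)) * Polynomial.derivative^[k] (Polynomial.X ^ n))
    (H : ℝ → ℕ → Polynomial ℝ)
    (hH0 : ∀ α : ℝ, H α 0 = 1) (hH1 : ∀ α : ℝ, H α 1 = Polynomial.X)
    (hH : ∀ α : ℝ, ∀ n : ℕ, 2 ≤ n →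
      H α n = Polynomial.X * H α (n - 1) - Polynomial.C (α * ((n : ℝ) - 1)) * H α (n - 2)) :
    (∃ L : Polynomial ℝ →ₗ[ℝ] ℝ,
        (∀ π : Polynomial ℝ, π ≠ 0 → (∀ x : ℝ, 0 ≤ π.eval x) → 0 < L π) ∧
        (∀ n : ℕ, (P n).degree = n) ∧
        (∀ m n : ℕ, m ≠ n → L (P m * P n) = 0)) ↔
    (γ 0 ≠ 0 ∧ ∃ α β : ℝ, 0 < α ∧
      ∀ n : ℕ, P n = Polynomial.C (γ 0) * (H α n).comp (Polynomial.X - Polynomial.C β)) := by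
  constructor
  · rintro ⟨L, hpos, hdeg, horth⟩
    obtain ⟨hγ0, α, β, hα, hrec0, hrecS⟩ := forward_rec γ P hP L hpos hdeg horth
    exact ⟨hγ0, α, β, hα, rec_to_H (γ 0) α β P H hH0 hH1 hH (Pzero hP) hrec0 hrecS⟩
  · rintro ⟨hγ0, α, β, hα, hPH⟩
    have hP0 : P 0 = C (γ 0) := Pzero hP
    have hrec0 : X * P 0 = P 1 + C β * P 0 := by
      rw [hPH 0, hPH 1, hH0, hH1, one_comp, X_comp]
      ring
    have hrecS : ∀ n : ℕ, X * P (n+1) = P (n+2) + C β * P (n+1) + C (((n:ℝ)+1) * α) * P n := by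
      intro n
      rw [hPH (n+1), hPH (n+2), hPH n, Hrec_std H hH α n, sub_comp, mul_comp, mul_comp,
        X_comp, C_comp]
      simp only [C_mul, C_add, C_1]
      ring
    exact reverse_dir γ P hP hγ0 α β hα hrec0 hrecS
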